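/- There exists a constant C > 0, independent of J, such that for all integers J ≥ 2 and all distinct i, j ∈ {0,...,J-1} with i + j < J - 1, Σ_{m=1}^{J-1} (cos²(mπ/J)/(1-cos²(mπ/J)))·(cos(mπ(i+0.5)/J) - cos(mπ(j+0.5)/J))² ≥ C·J·|i-j|. -/

import Mathlib

open Real Finset

private lemma Csum (J k : ℕ) (hJ : 2 ≤ J) (h1 : 1 ≤ k) (h2 : k ≤ J - 1) :
    ∑ m ∈ Finset.Icc 1 (J-1), Real.cos (2*(k:ℝ)*((m:ℝ)*π/J)) = -1 := by
  have hJ0 : (J:ℝ) ≠ 0 := by positivity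
  have hJc : (J:ℂ) ≠ 0 := by exact_mod_cast hJ0
  have hndvd : ¬ ((J:ℤ) ∣ (k:ℤ)) := by
    rw [Int.natCast_dvd_natCast]
    intro h
    have := Nat.le_of_dvd (by omega) h
    omega
  set z : ℂ := Complex.exp (2*π*Complex.I*k/J) with hzdef
  have hzJ : z ^ J = 1 := by
    rw [hzdef, ← Complex.exp_nat_mul]
    have : (J:ℂ) * (2*π*Complex.I*k/J) = (k:ℤ) * (2*π*Complex.I) := by
      push_cast; field_simp
    rw [this, Complex.exp_int_mul_two_pi_mul_I]
  have hz1 : z ≠ 1 := by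
    rw [hzdef, Ne, Complex.exp_eq_one_iff]
    push_neg
    intro n hn
    apply hndvd
    have hI : (2*(π:ℂ)*Complex.I) ≠ 0 := by
      simp [Complex.I_ne_zero, Real.pi_ne_zero]
    have hk : (k:ℂ) = n * J := by
      field_simp at hn
      have h2 : (k:ℂ) * (2*↑π*Complex.I) = (n * J) * (2*↑π*Complex.I) := by
        linear_combination (2*↑π*Complex.I) * hn
      exact mul_right_cancel₀ hI h2
    have : (k:ℤ) = n * J := by exact_mod_cast hk
    exact ⟨n, by linarith⟩
  have hgeom : ∑ m ∈ Finset.range J, z ^ m = 0 := by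
    rw [geom_sum_eq hz1, hzJ]
    simp
  have hre : ∀ m : ℕ, (z ^ m).re = Real.cos (2*(k:ℝ)*((m:ℝ)*π/J)) := by
    intro m
    rw [hzdef, ← Complex.exp_nat_mul]
    have : (m:ℂ) * (2*π*Complex.I*k/J) = ((2*(k:ℝ)*((m:ℝ)*π/J) : ℝ) : ℂ) * Complex.I := by
      push_cast; field_simp
    rw [this, Complex.exp_ofReal_mul_I_re]
  have hsumre : ∑ m ∈ Finset.range J, Real.cos (2*(k:ℝ)*((m:ℝ)*π/J)) = 0 := by
    have := congrArg Complex.re hgeom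
    rw [Complex.re_sum] at this
    simpa [hre] using this
  have hins : Finset.range J = insert 0 (Finset.Icc 1 (J-1)) := by
    ext x; simp [Finset.mem_range, Finset.mem_Icc, Finset.mem_insert]; omega
  rw [hins, Finset.sum_insert (by simp)] at hsumre
  simp only [Nat.cast_zero] at hsumre
  rw [show 2*(k:ℝ)*((0:ℝ)*π/J) = 0 by ring, Real.cos_zero] at hsumre
  linarith

private lemma Fodd (J k : ℕ) (hJ : 2 ≤ J) (hk : Odd k) :
    ∑ m ∈ Finset.Icc 1 (J-1),
      Real.cos ((m:ℝ)*π/J)^2 / Real.sin ((m:ℝ)*π/J)^2 * Real.cos ((k:ℝ)*((m:ℝ)*π/J)) = 0 := by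
  have hJ0 : (J:ℝ) ≠ 0 := by positivity
  apply Finset.sum_involution (fun m _ => J - m)
  · intro m hm
    simp only [Finset.mem_Icc] at hm
    have hcast : ((J - m : ℕ) : ℝ) = (J:ℝ) - m := by
      push_cast [Nat.cast_sub (by omega : m ≤ J)]; ring
    have harg : ((J - m : ℕ) : ℝ)*π/J = π - (m:ℝ)*π/J := by
      rw [hcast]; field_simp
    have hargk : (k:ℝ)*(π - (m:ℝ)*π/J) = (k:ℕ)*π - (k:ℝ)*((m:ℝ)*π/J) := by
      ring
    simp only [harg, hargk, Real.cos_pi_sub, Real.sin_pi_sub]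
    rw [Real.cos_nat_mul_pi_sub, Odd.neg_one_pow hk]
    ring
  · intro m hm hne
    simp only [Finset.mem_Icc] at hm
    intro heq
    apply hne
    have hJm : J = 2 * m := by omega
    have hm0 : (m:ℝ) ≠ 0 := by
      simp; omega
    have : (m:ℝ)*π/J = π/2 := by
      rw [hJm]; push_cast; field_simp
    rw [this, Real.cos_pi_div_two]
    norm_num
  · intro m hm
    simp only [Finset.mem_Icc] at hm ⊢
    omega
  · intro m hm
    simp only [Finset.mem_Icc] at hm
    omega

private lemma sin_ne (J m : ℕ) (hJ : 2 ≤ J) (hm : m ∈ Finset.Icc 1 (J-1)) :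
    Real.sin ((m:ℝ)*π/J) ≠ 0 := by
  simp only [Finset.mem_Icc] at hm
  have hJ0 : (0:ℝ) < J := by positivity
  have h1 : 0 < (m:ℝ)*π/J := by
    have : (0:ℝ) < m := by exact_mod_cast Nat.lt_of_lt_of_le Nat.zero_lt_one hm.1
    positivity
  have h2 : (m:ℝ)*π/J < π := by
    rw [div_lt_iff₀ hJ0]
    have hmJ : (m:ℝ) < J := by exact_mod_cast (by omega : m < J)
    nlinarith [Real.pi_pos]
  exact ne_of_gt (Real.sin_pos_of_pos_of_lt_pi h1 h2)

private lemma card1 (J : ℕ) (hJ : 2 ≤ J) : ∑ _m ∈ Finset.Icc 1 (J-1), (1:ℝ) = (J:ℝ) - 1 := by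
  rw [Finset.sum_const, Nat.card_Icc]
  have : J - 1 + 1 - 1 = J - 1 := by omega
  rw [this, nsmul_eq_mul, mul_one]
  push_cast [Nat.cast_sub (by omega : 1 ≤ J)]
  ring

private lemma psi_base (y : ℝ) (hs : Real.sin y ≠ 0) :
    Real.cos y^2 * Real.sin ((2*1+1)*y)/Real.sin y
    = 1 + (3/2)*Real.cos (2*1*y) + (1/2)*Real.cos (2*2*y) := by
  rw [show (2*(1:ℝ)+1)*y = 3*y by ring, show (2:ℝ)*1*y = 2*y by ring,
    show (2:ℝ)*2*y = 2*(2*y) by ring]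
  simp only [Real.sin_three_mul, Real.cos_two_mul]
  rw [div_eq_iff hs]
  linear_combination (-4*Real.sin y*Real.cos y^2) * (Real.sin_sq_add_cos_sq y)

private lemma psi_step (L y : ℝ) (hs : Real.sin y ≠ 0) :
    Real.cos y^2 * Real.sin ((2*(L+1)+1)*y) / Real.sin y
    = Real.cos y^2 * Real.sin ((2*L+1)*y) / Real.sin y
      + (Real.cos (2*(L+1)*y) + (Real.cos (2*(L+2)*y) + Real.cos (2*L*y))/2) := by
  have h1 : Real.sin ((2*(L+1)+1)*y) - Real.sin ((2*L+1)*y) = 2*Real.sin y*Real.cos ((2*L+2)*y) := by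
    rw [show (2*(L+1)+1)*y = (2*L+2)*y + y by ring, show (2*L+1)*y = (2*L+2)*y - y by ring,
      Real.sin_add, Real.sin_sub]; ring
  have h2 : Real.cos (2*(L+2)*y) + Real.cos (2*L*y) = 2*Real.cos ((2*L+2)*y)*Real.cos (2*y) := by
    rw [show 2*(L+2)*y = (2*L+2)*y + 2*y by ring, show 2*L*y = (2*L+2)*y - 2*y by ring,
      Real.cos_add, Real.cos_sub]; ring
  have h3 := Real.cos_two_mul y
  have key : Real.cos y^2 * Real.sin ((2*(L+1)+1)*y)
      = Real.cos y^2 * Real.sin ((2*L+1)*y)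
        + (Real.cos (2*(L+1)*y) + (Real.cos (2*(L+2)*y) + Real.cos (2*L*y))/2) * Real.sin y := by
    have h4 : Real.cos (2*(L+1)*y) = Real.cos ((2*L+2)*y) := by ring_nf
    rw [h4]
    linear_combination Real.cos y^2 * h1 + (-(Real.sin y)/2)*h2 + (-(Real.sin y)*Real.cos ((2*L+2)*y))*h3
  rw [key, add_div, mul_div_cancel_right₀ _ hs]

private lemma Psi (J : ℕ) (hJ : 2 ≤ J) (l : ℕ) (h1 : 1 ≤ l) (h2 : l ≤ J - 2) :
    ∑ m ∈ Finset.Icc 1 (J-1),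
      Real.cos ((m:ℝ)*π/J)^2 * Real.sin ((2*(l:ℝ)+1)*((m:ℝ)*π/J)) / Real.sin ((m:ℝ)*π/J)
    = (J:ℝ) - 2*l - 1 := by
  induction l, h1 using Nat.le_induction with
  | base =>
    have hpt : ∀ m ∈ Finset.Icc 1 (J-1),
        Real.cos ((m:ℝ)*π/J)^2 * Real.sin ((2*((1:ℕ):ℝ)+1)*((m:ℝ)*π/J)) / Real.sin ((m:ℝ)*π/J)
        = 1 + (3/2)*Real.cos (2*1*((m:ℝ)*π/J)) + (1/2)*Real.cos (2*2*((m:ℝ)*π/J)) := by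
      intro m hm
      have := psi_base ((m:ℝ)*π/J) (sin_ne J m hJ hm)
      push_cast
      convert this using 3
    rw [Finset.sum_congr rfl hpt, Finset.sum_add_distrib, Finset.sum_add_distrib,
      ← Finset.mul_sum, ← Finset.mul_sum]
    have c1 := Csum J 1 hJ le_rfl (by omega)
    have c2 := Csum J 2 hJ (by omega) (by omega)
    push_cast at c1 c2
    rw [c1, c2, card1 J hJ]
    push_cast
    ring
  | succ l hl ih =>
    have ihv := ih (by omega)
    have hpt : ∀ m ∈ Finset.Icc 1 (J-1),
        Real.cos ((m:ℝ)*π/J)^2 * Real.sin ((2*((l+1:ℕ):ℝ)+1)*((m:ℝ)*π/J)) / Real.sin ((m:ℝ)*π/J)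
        = Real.cos ((m:ℝ)*π/J)^2 * Real.sin ((2*(l:ℝ)+1)*((m:ℝ)*π/J)) / Real.sin ((m:ℝ)*π/J)
          + (Real.cos (2*((l:ℝ)+1)*((m:ℝ)*π/J))
            + (Real.cos (2*((l:ℝ)+2)*((m:ℝ)*π/J)) + Real.cos (2*(l:ℝ)*((m:ℝ)*π/J)))/2) := by
      intro m hm
      have := psi_step (l:ℝ) ((m:ℝ)*π/J) (sin_ne J m hJ hm)
      push_cast
      convert this using 4
    rw [Finset.sum_congr rfl hpt, Finset.sum_add_distrib, ihv, Finset.sum_add_distrib,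
      ← Finset.sum_div, Finset.sum_add_distrib]
    have c1 := Csum J (l+1) hJ (by omega) (by omega)
    have c2 := Csum J (l+2) hJ (by omega) (by omega)
    have c3 := Csum J l hJ (by omega) (by omega)
    push_cast at c1 c2 c3
    rw [c1, c2, c3]
    push_cast
    ring

private lemma phi_base (y : ℝ) (hs : Real.sin y ≠ 0) :
    Real.cos y^2/Real.sin y^2 * (2*Real.sin (1*y)^2) = 1 + Real.cos (2*1*y) := by
  rw [one_mul, show (2:ℝ)*1*y = 2*y by ring, Real.cos_two_mul]
  field_simp
  ring

private lemma phi_step (R y : ℝ) (hs : Real.sin y ≠ 0) :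
    Real.cos y^2/Real.sin y^2 * (2*Real.sin ((R+1)*y)^2)
    = Real.cos y^2/Real.sin y^2 * (2*Real.sin (R*y)^2)
      + 2*(Real.cos y^2 * Real.sin ((2*R+1)*y) / Real.sin y) := by
  have h1 : Real.sin ((R+1)*y)^2 - Real.sin (R*y)^2 = Real.sin ((2*R+1)*y) * Real.sin y := by
    rw [Real.sin_sq_eq_half_sub, Real.sin_sq_eq_half_sub,
      show 2*((R+1)*y) = (2*R+1)*y + y by ring, show 2*(R*y) = (2*R+1)*y - y by ring,
      Real.cos_add, Real.cos_sub]
    ring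
  have e1 : 2*(Real.cos y^2 * Real.sin ((2*R+1)*y)/Real.sin y)
      = Real.cos y^2/Real.sin y^2 * (2*(Real.sin ((R+1)*y)^2 - Real.sin (R*y)^2)) := by
    rw [h1]; field_simp
  rw [e1]; ring

private lemma Phi (J : ℕ) (hJ : 2 ≤ J) (r : ℕ) (h1 : 1 ≤ r) (h2 : 2*r ≤ J - 1) :
    ∑ m ∈ Finset.Icc 1 (J-1),
      Real.cos ((m:ℝ)*π/J)^2/Real.sin ((m:ℝ)*π/J)^2 * (2*Real.sin ((r:ℝ)*((m:ℝ)*π/J))^2)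
    = 2*(r:ℝ)*((J:ℝ)-(r:ℝ)) - J := by
  induction r, h1 using Nat.le_induction with
  | base =>
    have hpt : ∀ m ∈ Finset.Icc 1 (J-1),
        Real.cos ((m:ℝ)*π/J)^2/Real.sin ((m:ℝ)*π/J)^2 * (2*Real.sin (((1:ℕ):ℝ)*((m:ℝ)*π/J))^2)
        = 1 + Real.cos (2*1*((m:ℝ)*π/J)) := by
      intro m hm
      have := phi_base ((m:ℝ)*π/J) (sin_ne J m hJ hm)
      push_cast
      convert this using 3
    rw [Finset.sum_congr rfl hpt, Finset.sum_add_distrib]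
    have c1 := Csum J 1 hJ le_rfl (by omega)
    push_cast at c1
    rw [c1, card1 J hJ]
    push_cast
    ring
  | succ r hr ih =>
    have ihv := ih (by omega)
    have hpsi := Psi J hJ r (by omega) (by omega)
    have hpt : ∀ m ∈ Finset.Icc 1 (J-1),
        Real.cos ((m:ℝ)*π/J)^2/Real.sin ((m:ℝ)*π/J)^2 * (2*Real.sin (((r+1:ℕ):ℝ)*((m:ℝ)*π/J))^2)
        = Real.cos ((m:ℝ)*π/J)^2/Real.sin ((m:ℝ)*π/J)^2 * (2*Real.sin ((r:ℝ)*((m:ℝ)*π/J))^2)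
          + 2*(Real.cos ((m:ℝ)*π/J)^2 * Real.sin ((2*(r:ℝ)+1)*((m:ℝ)*π/J)) / Real.sin ((m:ℝ)*π/J)) := by
      intro m hm
      have := phi_step (r:ℝ) ((m:ℝ)*π/J) (sin_ne J m hJ hm)
      push_cast
      convert this using 4
    rw [Finset.sum_congr rfl hpt, Finset.sum_add_distrib, ihv, ← Finset.mul_sum, hpsi]
    push_cast
    ring

private lemma cosdiff (A B : ℝ) : (Real.cos A - Real.cos B)^2
    = 1 + Real.cos (2*A)/2 + Real.cos (2*B)/2 - Real.cos (A+B) - Real.cos (A-B) := by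
  rw [Real.cos_two_mul, Real.cos_two_mul, Real.cos_add, Real.cos_sub]
  ring

private lemma point_id (a b y : ℝ) :
    Real.cos y^2/(1 - Real.cos y^2) * (Real.cos (a*y) - Real.cos (b*y))^2
    = Real.cos y^2/Real.sin y^2 * (2*Real.sin (((a+b)/2)*y)^2)
      + (Real.cos y^2/Real.sin y^2 * Real.cos ((2*a)*y))/2
      + (Real.cos y^2/Real.sin y^2 * Real.cos ((2*b)*y))/2
      - Real.cos y^2/Real.sin y^2 * Real.cos ((a-b)*y) := by
  rw [← Real.sin_sq]
  have e1 : (Real.cos (a*y) - Real.cos (b*y))^2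
      = 1 + Real.cos (2*a*y)/2 + Real.cos (2*b*y)/2
        - Real.cos ((a+b)*y) - Real.cos ((a-b)*y) := by
    have h := cosdiff (a*y) (b*y)
    rw [show 2*(a*y) = 2*a*y by ring, show 2*(b*y) = 2*b*y by ring,
      show a*y + b*y = (a+b)*y by ring, show a*y - b*y = (a-b)*y by ring] at h
    exact h
  have e2 : 2*Real.sin (((a+b)/2)*y)^2 = 1 - Real.cos ((a+b)*y) := by
    rw [Real.sin_sq_eq_half_sub, show 2*(((a+b)/2)*y) = (a+b)*y by ring]
    ring
  rw [e1, e2]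
  ring

private lemma point_id2 (a b y : ℝ) :
    Real.cos y^2/(1 - Real.cos y^2) * (Real.cos (a*y) - Real.cos (b*y))^2
    = Real.cos y^2/Real.sin y^2 * (2*Real.sin (((a-b)/2)*y)^2)
      + (Real.cos y^2/Real.sin y^2 * Real.cos ((2*a)*y))/2
      + (Real.cos y^2/Real.sin y^2 * Real.cos ((2*b)*y))/2
      - Real.cos y^2/Real.sin y^2 * Real.cos ((a+b)*y) := by
  rw [← Real.sin_sq]
  have e1 : (Real.cos (a*y) - Real.cos (b*y))^2
      = 1 + Real.cos (2*a*y)/2 + Real.cos (2*b*y)/2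
        - Real.cos ((a+b)*y) - Real.cos ((a-b)*y) := by
    have h := cosdiff (a*y) (b*y)
    rw [show 2*(a*y) = 2*a*y by ring, show 2*(b*y) = 2*b*y by ring,
      show a*y + b*y = (a+b)*y by ring, show a*y - b*y = (a-b)*y by ring] at h
    exact h
  have e2 : 2*Real.sin (((a-b)/2)*y)^2 = 1 - Real.cos ((a-b)*y) := by
    rw [Real.sin_sq_eq_half_sub, show 2*(((a-b)/2)*y) = (a-b)*y by ring]
    ring
  rw [e1, e2]
  ring

private lemma key (J i j r : ℕ) (hJ : 2 ≤ J) (hij : i < j) (hsum : i + j ≤ J - 2)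
    (hr : 2*r = j - i ∨ 2*r = i + j + 1) :
    ∑ m ∈ Finset.Icc 1 (J - 1),
        (Real.cos ((m : ℝ) * π / J)) ^ 2 / (1 - (Real.cos ((m : ℝ) * π / J)) ^ 2) *
          (Real.cos ((m : ℝ) * π * ((i : ℝ) + 0.5) / J) -
            Real.cos ((m : ℝ) * π * ((j : ℝ) + 0.5) / J)) ^ 2
    = 2*(r:ℝ)*((J:ℝ)-(r:ℝ)) - J := by
  have hr1 : 1 ≤ r := by omega
  have hr2 : 2*r ≤ J - 1 := by omega
  rcases hr with hA | hA
  · have hodd1 : Odd (2*i+1) := ⟨i, by omega⟩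
    have hodd2 : Odd (2*j+1) := ⟨j, by omega⟩
    have hodd3 : Odd (i+j+1) := by
      rw [Nat.odd_iff]; omega
    have hpt : ∀ m ∈ Finset.Icc 1 (J-1),
        (Real.cos ((m : ℝ) * π / J)) ^ 2 / (1 - (Real.cos ((m : ℝ) * π / J)) ^ 2) *
          (Real.cos ((m : ℝ) * π * ((i : ℝ) + 0.5) / J) -
            Real.cos ((m : ℝ) * π * ((j : ℝ) + 0.5) / J)) ^ 2
        = Real.cos ((m:ℝ)*π/J)^2/Real.sin ((m:ℝ)*π/J)^2 * (2*Real.sin ((r:ℝ)*((m:ℝ)*π/J))^2)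
          + (Real.cos ((m:ℝ)*π/J)^2/Real.sin ((m:ℝ)*π/J)^2 * Real.cos (((2*j+1:ℕ):ℝ)*((m:ℝ)*π/J)))/2
          + (Real.cos ((m:ℝ)*π/J)^2/Real.sin ((m:ℝ)*π/J)^2 * Real.cos (((2*i+1:ℕ):ℝ)*((m:ℝ)*π/J)))/2
          - Real.cos ((m:ℝ)*π/J)^2/Real.sin ((m:ℝ)*π/J)^2 * Real.cos (((i+j+1:ℕ):ℝ)*((m:ℝ)*π/J)) := by
      intro m hm
      rw [show (m:ℝ)*π*((i:ℝ)+0.5)/J = ((i:ℝ)+0.5)*((m:ℝ)*π/J) by ring,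
        show (m:ℝ)*π*((j:ℝ)+0.5)/J = ((j:ℝ)+0.5)*((m:ℝ)*π/J) by ring,
        show ((Real.cos (((i:ℝ)+0.5)*((m:ℝ)*π/J)) - Real.cos (((j:ℝ)+0.5)*((m:ℝ)*π/J)))^2
          = (Real.cos (((j:ℝ)+0.5)*((m:ℝ)*π/J)) - Real.cos (((i:ℝ)+0.5)*((m:ℝ)*π/J)))^2) by ring,
        point_id2 ((j:ℝ)+0.5) ((i:ℝ)+0.5) ((m:ℝ)*π/J)]
      rw [show (((j:ℝ)+0.5) - ((i:ℝ)+0.5))/2 = (r:ℝ) by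
          have h' := congrArg (fun n : ℕ => (n:ℝ)) hA
          push_cast [Nat.cast_sub hij.le] at h'
          linarith,
        show 2*((j:ℝ)+0.5) = ((2*j+1:ℕ):ℝ) by push_cast; ring,
        show 2*((i:ℝ)+0.5) = ((2*i+1:ℕ):ℝ) by push_cast; ring,
        show ((j:ℝ)+0.5) + ((i:ℝ)+0.5) = ((i+j+1:ℕ):ℝ) by push_cast; ring]
    rw [Finset.sum_congr rfl hpt, Finset.sum_sub_distrib, Finset.sum_add_distrib,
      Finset.sum_add_distrib, ← Finset.sum_div, ← Finset.sum_div,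
      Phi J hJ r hr1 hr2, Fodd J (2*j+1) hJ hodd2, Fodd J (2*i+1) hJ hodd1,
      Fodd J (i+j+1) hJ hodd3]
    norm_num
  · have hodd1 : Odd (2*i+1) := ⟨i, by omega⟩
    have hodd2 : Odd (2*j+1) := ⟨j, by omega⟩
    have hodd3 : Odd (j-i) := by
      rw [Nat.odd_iff]; omega
    have hpt : ∀ m ∈ Finset.Icc 1 (J-1),
        (Real.cos ((m : ℝ) * π / J)) ^ 2 / (1 - (Real.cos ((m : ℝ) * π / J)) ^ 2) *
          (Real.cos ((m : ℝ) * π * ((i : ℝ) + 0.5) / J) -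
            Real.cos ((m : ℝ) * π * ((j : ℝ) + 0.5) / J)) ^ 2
        = Real.cos ((m:ℝ)*π/J)^2/Real.sin ((m:ℝ)*π/J)^2 * (2*Real.sin ((r:ℝ)*((m:ℝ)*π/J))^2)
          + (Real.cos ((m:ℝ)*π/J)^2/Real.sin ((m:ℝ)*π/J)^2 * Real.cos (((2*i+1:ℕ):ℝ)*((m:ℝ)*π/J)))/2
          + (Real.cos ((m:ℝ)*π/J)^2/Real.sin ((m:ℝ)*π/J)^2 * Real.cos (((2*j+1:ℕ):ℝ)*((m:ℝ)*π/J)))/2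
          - Real.cos ((m:ℝ)*π/J)^2/Real.sin ((m:ℝ)*π/J)^2 * Real.cos (((j-i:ℕ):ℝ)*((m:ℝ)*π/J)) := by
      intro m hm
      rw [show (m:ℝ)*π*((i:ℝ)+0.5)/J = ((i:ℝ)+0.5)*((m:ℝ)*π/J) by ring,
        show (m:ℝ)*π*((j:ℝ)+0.5)/J = ((j:ℝ)+0.5)*((m:ℝ)*π/J) by ring,
        point_id ((i:ℝ)+0.5) ((j:ℝ)+0.5) ((m:ℝ)*π/J)]
      rw [show (((i:ℝ)+0.5) + ((j:ℝ)+0.5))/2 = (r:ℝ) by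
          have h' := congrArg (fun n : ℕ => (n:ℝ)) hA
          push_cast at h'
          linarith,
        show 2*((j:ℝ)+0.5) = ((2*j+1:ℕ):ℝ) by push_cast; ring,
        show 2*((i:ℝ)+0.5) = ((2*i+1:ℕ):ℝ) by push_cast; ring,
        show (((i:ℝ)+0.5) - ((j:ℝ)+0.5))*((m:ℝ)*π/J) = -((((j-i:ℕ)):ℝ)*((m:ℝ)*π/J)) by
          push_cast [Nat.cast_sub hij.le]; ring,
        Real.cos_neg]
    rw [Finset.sum_congr rfl hpt, Finset.sum_sub_distrib, Finset.sum_add_distrib,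
      Finset.sum_add_distrib, ← Finset.sum_div, ← Finset.sum_div,
      Phi J hJ r hr1 hr2, Fodd J (2*i+1) hJ hodd1, Fodd J (2*j+1) hJ hodd2,
      Fodd J (j-i) hJ hodd3]
    norm_num

private lemma final_bound (J r d : ℕ) (hJ : 3 ≤ J) (hr1 : 1 ≤ r) (hr2 : 2*r ≤ J - 1)
    (hd1 : 1 ≤ d) (hd2 : d ≤ 2*r) :
    2*(r:ℝ)*((J:ℝ)-(r:ℝ)) - J ≥ 1/6 * J * d := by
  have hR1 : (1:ℝ) ≤ r := by exact_mod_cast hr1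
  have hR2 : 2*(r:ℝ) ≤ (J:ℝ) - 1 := by
    have : (2*r:ℕ) ≤ (J - 1:ℕ) := hr2
    have h' : ((2*r:ℕ):ℝ) ≤ ((J-1:ℕ):ℝ) := by exact_mod_cast this
    push_cast [Nat.cast_sub (by omega : 1 ≤ J)] at h'
    linarith
  have hD1 : (1:ℝ) ≤ d := by exact_mod_cast hd1
  have hD2 : (d:ℝ) ≤ 2*r := by exact_mod_cast hd2
  have hJ3 : (3:ℝ) ≤ J := by exact_mod_cast hJ
  nlinarith [mul_nonneg (by linarith : (0:ℝ) ≤ (J:ℝ)) (by linarith : (0:ℝ) ≤ 2*(r:ℝ) - d),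
    mul_nonneg (by linarith : (0:ℝ) ≤ (r:ℝ) - 1) (by linarith : (0:ℝ) ≤ (J:ℝ) - 1 - 2*r),
    mul_nonneg (by linarith : (0:ℝ) ≤ (r:ℝ) - 1) (by linarith : (0:ℝ) ≤ (J:ℝ) - 3)]

theorem variance_lower_bound :
    ∃ C : ℝ, 0 < C ∧ ∀ J : ℕ, 2 ≤ J → ∀ i j : ℕ, i ≤ J - 1 → j ≤ J - 1 → i ≠ j →
      i + j < J - 1 →
      ∑ m ∈ Finset.Icc 1 (J - 1),
          (Real.cos ((m : ℝ) * π / J)) ^ 2 / (1 - (Real.cos ((m : ℝ) * π / J)) ^ 2) *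
            (Real.cos ((m : ℝ) * π * ((i : ℝ) + 0.5) / J) -
              Real.cos ((m : ℝ) * π * ((j : ℝ) + 0.5) / J)) ^ 2 ≥
        C * J * |(i : ℝ) - (j : ℝ)| := by
  refine ⟨1/6, by norm_num, ?_⟩
  intro J hJ i j hi hj hij hij2
  have hJ3 : 3 ≤ J := by omega
  have hsum : i + j ≤ J - 2 := by omega
  rcases lt_or_gt_of_ne hij with hlt | hlt
  · -- i < j
    obtain ⟨r, hr⟩ : ∃ r : ℕ, 2*r = j - i ∨ 2*r = i + j + 1 := by
      rcases Nat.even_or_odd (j - i) with he | ho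
      · exact ⟨(j-i)/2, Or.inl (by rw [Nat.even_iff] at he; omega)⟩
      · exact ⟨(i+j+1)/2, Or.inr (by rw [Nat.odd_iff] at ho; omega)⟩
    rw [key J i j r hJ hlt hsum hr]
    have habs : |(i:ℝ) - (j:ℝ)| = ((j - i : ℕ):ℝ) := by
      rw [abs_sub_comm, abs_of_nonneg (sub_nonneg.2 (by exact_mod_cast hlt.le)),
        Nat.cast_sub hlt.le]
    rw [habs]
    have := final_bound J r (j-i) hJ3 (by omega) (by omega) (by omega) (by omega)
    linarith
  · -- j < i
    have hswap : ∑ m ∈ Finset.Icc 1 (J - 1),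
          (Real.cos ((m : ℝ) * π / J)) ^ 2 / (1 - (Real.cos ((m : ℝ) * π / J)) ^ 2) *
            (Real.cos ((m : ℝ) * π * ((i : ℝ) + 0.5) / J) -
              Real.cos ((m : ℝ) * π * ((j : ℝ) + 0.5) / J)) ^ 2
        = ∑ m ∈ Finset.Icc 1 (J - 1),
          (Real.cos ((m : ℝ) * π / J)) ^ 2 / (1 - (Real.cos ((m : ℝ) * π / J)) ^ 2) *
            (Real.cos ((m : ℝ) * π * ((j : ℝ) + 0.5) / J) -
              Real.cos ((m : ℝ) * π * ((i : ℝ) + 0.5) / J)) ^ 2 :=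
      Finset.sum_congr rfl (fun m _ => by ring)
    obtain ⟨r, hr⟩ : ∃ r : ℕ, 2*r = i - j ∨ 2*r = j + i + 1 := by
      rcases Nat.even_or_odd (i - j) with he | ho
      · exact ⟨(i-j)/2, Or.inl (by rw [Nat.even_iff] at he; omega)⟩
      · exact ⟨(j+i+1)/2, Or.inr (by rw [Nat.odd_iff] at ho; omega)⟩
    rw [hswap, key J j i r hJ hlt (by omega) hr]
    have habs : |(i:ℝ) - (j:ℝ)| = ((i - j : ℕ):ℝ) := by
      rw [abs_of_nonneg (sub_nonneg.2 (by exact_mod_cast hlt.le)), Nat.cast_sub hlt.le]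
    rw [habs]
    have := final_bound J r (i-j) hJ3 (by omega) (by omega) (by omega) (by omega)
    linarith
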